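/- Let X ~ N(μ₁, σ₁²I_n) and consider conditional Gaussian densities. The posterior q(x^(t-1) | x^(t), x^(0)) in the DDPM forward process is Gaussian with mean μ̃ = (√(α^(t)) (1-ᾱ^(t-1)) x^(t) + √(ᾱ^(t-1)) β^(t) x^(0)) / (1-ᾱ^(t)) and variance β̃^(t) = (1-ᾱ^(t-1))β^(t)/(1-ᾱ^(t)), where q(x^(t)|x^(t-1)) = N(√(α^(t)) x^(t-1), β^(t) I) and q(x^(t-1)|x^(0)) = N(√(ᾱ^(t-1)) x^(0), (1-ᾱ^(t-1)) I). -/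

import Mathlib

set_option maxHeartbeats 2000000


open Real

/-- Density of the isotropic Gaussian `N(m, v·I_n)` on `ℝⁿ`. -/
noncomputable def gpdf {n : ℕ} (m : EuclideanSpace ℝ (Fin n)) (v : ℝ)
    (x : EuclideanSpace ℝ (Fin n)) : ℝ :=
  (2 * π * v) ^ (-(n : ℝ) / 2) * Real.exp (-‖x - m‖ ^ 2 / (2 * v))

lemma stmt_11_aux (K1 K2 K3 E1 E2 D E3 : ℝ) (hK3 : K3 ≠ 0) (hE : E1 + E2 = D + E3) :
    K1 * Real.exp E1 * (K2 * Real.exp E2) = K1 * K2 / K3 * Real.exp D * (K3 * Real.exp E3) := by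
  have h : Real.exp E1 * Real.exp E2 = Real.exp D * Real.exp E3 := by
    rw [← Real.exp_add, ← Real.exp_add, hE]
  have h2 : K1 * K2 / K3 * Real.exp D * (K3 * Real.exp E3)
      = K1 * K2 * (K3 / K3) * (Real.exp D * Real.exp E3) := by ring
  rw [h2, div_self hK3, mul_one, mul_mul_mul_comm, h]

/-- The DDPM posterior `q(x⁽ᵗ⁻¹⁾ | x⁽ᵗ⁾, x⁽⁰⁾)` is Gaussian with
mean `μ̃ = (√α⁽ᵗ⁾(1-ᾱ⁽ᵗ⁻¹⁾)x⁽ᵗ⁾ + √(ᾱ⁽ᵗ⁻¹⁾)β⁽ᵗ⁾x⁽⁰⁾)/(1-ᾱ⁽ᵗ⁾)` and variance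
`β̃⁽ᵗ⁾ = (1-ᾱ⁽ᵗ⁻¹⁾)β⁽ᵗ⁾/(1-ᾱ⁽ᵗ⁾)`:  by Bayes' rule, the product of densities
`q(x⁽ᵗ⁾|x⁽ᵗ⁻¹⁾)·q(x⁽ᵗ⁻¹⁾|x⁽⁰⁾)` is, as a function of `x⁽ᵗ⁻¹⁾`, proportional
(with a factor depending only on `x⁽ᵗ⁾, x⁽⁰⁾`) to the stated Gaussian density. -/
theorem stmt_11 {n : ℕ} (α β abar' abar : ℝ)
    (hα : α ∈ Set.Ioo (0 : ℝ) 1) (hβ : β = 1 - α)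
    (habar' : abar' ∈ Set.Ioo (0 : ℝ) 1) (habar : abar = α * abar') :
    ∃ C : EuclideanSpace ℝ (Fin n) → EuclideanSpace ℝ (Fin n) → ℝ,
      ∀ xt x0 xprev : EuclideanSpace ℝ (Fin n),
        gpdf (Real.sqrt α • xprev) β xt * gpdf (Real.sqrt abar' • x0) (1 - abar') xprev
          = C xt x0 *
            gpdf ((Real.sqrt α * (1 - abar') / (1 - abar)) • xt
                    + (Real.sqrt abar' * β / (1 - abar)) • x0)
              ((1 - abar') * β / (1 - abar)) xprev := by
  obtain ⟨hα0, hα1⟩ := hα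
  obtain ⟨hb0, hb1⟩ := habar'
  have hsa2 : Real.sqrt α ^ 2 = α := Real.sq_sqrt hα0.le
  have hsb2 : Real.sqrt abar' ^ 2 = abar' := Real.sq_sqrt hb0.le
  have hβ0 : (0:ℝ) < β := by rw [hβ]; linarith
  have h1b : (0:ℝ) < 1 - abar' := by linarith
  have h1a : (0:ℝ) < 1 - abar := by nlinarith [habar]
  set sa := Real.sqrt α
  set sb := Real.sqrt abar'
  refine ⟨fun xt x0 => ((2*π*β) ^ (-(n:ℝ)/2) * (2*π*(1-abar')) ^ (-(n:ℝ)/2) /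
      (2*π*((1-abar')*β/(1-abar))) ^ (-(n:ℝ)/2)) *
      Real.exp (-‖xt‖^2/(2*β) - sb^2*‖x0‖^2/(2*(1-abar'))
        + ‖(sa * (1-abar')/(1-abar)) • xt + (sb*β/(1-abar)) • x0‖^2
          / (2*((1-abar')*β/(1-abar)))), ?_⟩
  intro xt x0 xprev
  unfold gpdf
  have hK3 : (2*π*((1-abar')*β/(1-abar))) ^ (-(n:ℝ)/2) ≠ 0 := by
    have : (0:ℝ) < 2*π*((1-abar')*β/(1-abar)) := by positivity
    exact (Real.rpow_pos_of_pos this _).ne'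
  have hE : -‖xt - sa • xprev‖^2/(2*β) + -‖xprev - sb • x0‖^2/(2*(1-abar'))
      = (-‖xt‖^2/(2*β) - sb^2*‖x0‖^2/(2*(1-abar'))
          + ‖(sa * (1-abar')/(1-abar)) • xt + (sb*β/(1-abar)) • x0‖^2
            / (2*((1-abar')*β/(1-abar))))
        + -‖xprev - ((sa * (1-abar')/(1-abar)) • xt + (sb*β/(1-abar)) • x0)‖^2
            / (2*((1-abar')*β/(1-abar))) := by
    have expand : ∀ (a b : EuclideanSpace ℝ (Fin n)),
        ‖a - b‖^2 = ‖a‖^2 - 2*(inner ℝ a b : ℝ) + ‖b‖^2 := fun a b => norm_sub_sq_real a b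
    rw [expand, expand, expand]
    have h1 : (inner ℝ xt (sa • xprev) : ℝ) = sa * inner ℝ xt xprev := real_inner_smul_right _ _ _
    have h2 : (inner ℝ xprev (sb • x0) : ℝ) = sb * inner ℝ xprev x0 := real_inner_smul_right _ _ _
    have h3 : ‖sa • xprev‖^2 = sa^2 * ‖xprev‖^2 := by
      rw [norm_smul, mul_pow, Real.norm_eq_abs, sq_abs]
    have h4 : ‖sb • x0‖^2 = sb^2 * ‖x0‖^2 := by
      rw [norm_smul, mul_pow, Real.norm_eq_abs, sq_abs]
    have h5 : (inner ℝ xprev ((sa * (1-abar')/(1-abar)) • xt + (sb*β/(1-abar)) • x0) : ℝ)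
        = (sa * (1-abar')/(1-abar)) * inner ℝ xprev xt + (sb*β/(1-abar)) * inner ℝ xprev x0 := by
      rw [inner_add_right, real_inner_smul_right, real_inner_smul_right]
    have h6 : ‖(sa * (1-abar')/(1-abar)) • xt + (sb*β/(1-abar)) • x0‖^2
        = (sa * (1-abar')/(1-abar))^2 * ‖xt‖^2
          + 2 * ((sa * (1-abar')/(1-abar)) * (sb*β/(1-abar)) * inner ℝ xt x0)
          + (sb*β/(1-abar))^2 * ‖x0‖^2 := by
      rw [norm_add_sq_real, real_inner_smul_left, real_inner_smul_right,
        norm_smul, norm_smul, mul_pow, mul_pow, Real.norm_eq_abs, Real.norm_eq_abs,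
        sq_abs, sq_abs]
      ring
    have hc1 : (inner ℝ xprev xt : ℝ) = inner ℝ xt xprev := real_inner_comm _ _
    rw [h1, h2, h3, h4, h5, h6, hc1]
    have hab : abar = sa^2 * sb^2 := by rw [habar, hsa2, hsb2]
    have hβ' : β = 1 - sa^2 := by rw [hβ, hsa2]
    rw [hab, hβ', ← hsb2]
    generalize ‖xt‖^2 = N1
    generalize ‖x0‖^2 = N2
    generalize ‖xprev‖^2 = N3
    generalize (inner ℝ xt xprev : ℝ) = i13
    generalize (inner ℝ xprev x0 : ℝ) = i23
    generalize (inner ℝ xt x0 : ℝ) = i12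
    have h1a' : (0:ℝ) < 1 - sa^2*sb^2 := by rw [← hab]; exact h1a
    have h1b' : (0:ℝ) < 1 - sb^2 := by rw [hsb2]; exact h1b
    have hβ0' : (0:ℝ) < 1 - sa^2 := by rw [← hβ']; exact hβ0
    clear hab hβ' hsa2 hsb2 h1a h1b hβ0 habar hβ
    set_option maxHeartbeats 1000000 in
    field_simp
    set_option maxHeartbeats 1000000 in
    ring
  exact stmt_11_aux _ _ _ _ _ _ _ hK3 hE
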